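/- Let p be a prime, let w be an infinite word with letters w(1), w(2), …, and let y ∈ ℚ_p² be nonzero with (w, y) ∈ LMad. Then there exists k₀ ∈ ℕ such that for every k > k₀ and all integers n, l ≥ 1: if U_k(T^{n−1} w) = U_k(T^{l−1} w) and U_k(T^n w) = U_k(T^l w), then w(n) = w(l). -/

import Mathlib

open Matrix Filter

/-- The matrix `A_a = [[0,1],[1,a]]` associated to a letter `a`. -/
def Amat (a : ℕ) : Matrix (Fin 2) (Fin 2) ℤ := !![0, 1; 1, (a : ℤ)]

/-- The matrix `A_u` associated to a finite word `u` (product of the `A_a`). -/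
def Aword (u : List ℕ) : Matrix (Fin 2) (Fin 2) ℤ := (u.map Amat).prod

/-- The prefix of length `n` of an infinite word `w`. -/
def wordPrefix (w : ℕ → ℕ) (n : ℕ) : List ℕ := (List.range n).map w

/-- The left shift `T^m w` of an infinite word. -/
def shiftW (w : ℕ → ℕ) (m : ℕ) : ℕ → ℕ := fun i => w (m + i)

/-- Distance from a real number to the nearest integer. -/
noncomputable def distNearestInt (t : ℝ) : ℝ := |t - round t|

/-- `q ∈ PBad_ε` : `q` is a `p`-adically badly approximable vector with constant `ε`. -/
def PBadE (p : ℕ) [Fact p.Prime] (ε : ℝ) (q : Fin 2 → ℚ_[p]) : Prop :=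
  ∀ a b : ℤ, ¬(a = 0 ∧ b = 0) →
    ε / max ((a : ℝ) ^ 2) ((b : ℝ) ^ 2) ≤
      ‖(a : ℚ_[p]) * q 0 + (b : ℚ_[p]) * q 1‖ / max ‖q 0‖ ‖q 1‖

/-- An integer matrix viewed as a matrix over `ℚ_[p]`. -/
noncomputable def matQ (p : ℕ) [Fact p.Prime] (M : Matrix (Fin 2) (Fin 2) ℤ) :
    Matrix (Fin 2) (Fin 2) ℚ_[p] := M.map Int.cast

/-- `(w, y) ∈ LMad_ε`. -/
def LMadE (p : ℕ) [Fact p.Prime] (ε : ℝ) (w : ℕ → ℕ) (y : Fin 2 → ℚ_[p]) : Prop :=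
  (∀ n, 1 ≤ w n ∧ (w n : ℤ) ≤ ⌊ε⁻¹⌋ + 1) ∧
  ∀ n : ℕ, PBadE p ε (Matrix.mulVec (matQ p (Aword (wordPrefix w n))ᵀ) y)

/-- `(w, y) ∈ LMad`. -/
def LMad (p : ℕ) [Fact p.Prime] (w : ℕ → ℕ) (y : Fin 2 → ℚ_[p]) : Prop :=
  ∃ ε > 0, LMadE p ε w y

/-- The projective distance `d` on nonzero vectors of `ℚ_[p]²`. -/
noncomputable def pdist (p : ℕ) [Fact p.Prime] (u v : Fin 2 → ℚ_[p]) : ℝ :=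
  ‖u 0 * v 1 - u 1 * v 0‖ / (max ‖u 0‖ ‖u 1‖ * max ‖v 0‖ ‖v 1‖)

/-- `q ∈ B_k(w, y)` : `q` is `p^{-k}`-close to some `(A_{w_n})ᵀ y`. -/
def inBk (p : ℕ) [Fact p.Prime] (k : ℕ) (w : ℕ → ℕ) (y : Fin 2 → ℚ_[p])
    (q : Fin 2 → ℚ_[p]) : Prop :=
  q ≠ 0 ∧ ∃ n : ℕ,
    pdist p q (Matrix.mulVec (matQ p (Aword (wordPrefix w n))ᵀ) y) ≤ (p : ℝ) ^ (-(k : ℤ))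

/-- `U_k(w)` : set of reductions mod `p^k` of the matrices of all prefixes of `w`. -/
def Uk (p k : ℕ) (w : ℕ → ℕ) : Set (Matrix (Fin 2) (Fin 2) (ZMod (p ^ k))) :=
  { M | ∃ n : ℕ, M = (Aword (wordPrefix w n)).map Int.cast }

/-- The finite word `u` occurs in `w` at position `m`. -/
def occursAt (w : ℕ → ℕ) (u : List ℕ) (m : ℕ) : Prop :=
  u = (List.range u.length).map fun i => w (m + i)

/-- `u` is a factor of the infinite word `w`. -/
def IsFactor (u : List ℕ) (w : ℕ → ℕ) : Prop := ∃ m, occursAt w u m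

/-- `w` is recurrent: every factor occurs infinitely often. -/
def Recurrent (w : ℕ → ℕ) : Prop :=
  ∀ u : List ℕ, IsFactor u w → ∀ M : ℕ, ∃ m, M ≤ m ∧ occursAt w u m

/-- `w` is uniformly recurrent: recurrent with bounded gaps between occurrences. -/
def UniformlyRecurrent (w : ℕ → ℕ) : Prop :=
  Recurrent w ∧
    ∀ u : List ℕ, IsFactor u w →
      ∃ d : ℕ, ∀ m : ℕ, ∃ m', m ≤ m' ∧ m' ≤ m + d ∧ occursAt w u m'

/-- The complexity `P(w, n)` : number of distinct factors of `w` of length `n`. -/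
noncomputable def complexity (w : ℕ → ℕ) (n : ℕ) : ℕ :=
  Set.ncard { u : List ℕ | u.length = n ∧ IsFactor u w }

/-- `a` is the sequence of partial quotients of the continued fraction expansion of `x`,
obtained by iterating the Gauss map. -/
def IsCFSeq (x : ℝ) (a : ℕ → ℕ) : Prop :=
  ∃ ξ : ℕ → ℝ, ξ 0 = x ∧
    ∀ n, (0 < ξ n ∧ ξ n < 1) ∧ ((a n : ℤ) = ⌊(ξ n)⁻¹⌋) ∧ ξ (n + 1) = (ξ n)⁻¹ - (a n : ℝ)

/-- `Q` is the (index-shifted) sequence of denominators of the convergents of the continued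
fraction with partial quotients `a` : `Q (n+1)` is the paper's `q_n`. -/
def IsCFDen (a : ℕ → ℕ) (Q : ℕ → ℤ) : Prop :=
  Q 0 = 0 ∧ Q 1 = 1 ∧ ∀ n, Q (n + 2) = (a n : ℤ) * Q (n + 1) + Q n

section AuxCombinatorial

lemma Aword_nil' : Aword [] = 1 := rfl

lemma Aword_cons (a : ℕ) (u : List ℕ) : Aword (a :: u) = Amat a * Aword u := by
  simp [Aword]

lemma Aword_append (u v : List ℕ) : Aword (u ++ v) = Aword u * Aword v := by
  simp [Aword]

lemma wordPrefix_succ_shift (w : ℕ → ℕ) (m n : ℕ) :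
    wordPrefix (shiftW w m) (n+1) = w m :: wordPrefix (shiftW w (m+1)) n := by
  simp only [wordPrefix, List.range_succ_eq_map, List.map_cons, List.map_map, shiftW]
  have h : (shiftW w m ∘ Nat.succ) = shiftW w (m+1) := by
    funext a; simp only [Function.comp_apply, shiftW]; congr 1; omega
  rw [h]
  norm_num

lemma wordPrefix_add (w : ℕ → ℕ) (m n : ℕ) :
    wordPrefix w (m + n) = wordPrefix w m ++ wordPrefix (shiftW w m) n := by
  simp only [wordPrefix, List.range_add, List.map_append, List.map_map, shiftW]
  rfl

def Bmat (a : ℕ) : Matrix (Fin 2) (Fin 2) ℤ := !![-(a : ℤ), 1; 1, 0]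

lemma Bmat_Amat (a : ℕ) : Bmat a * Amat a = 1 := by
  simp [Bmat, Amat, Matrix.mul_fin_two, Matrix.one_fin_two]

lemma Bmat_mul_Amat (a b : ℕ) : Bmat a * Amat b = !![1, (b:ℤ) - a; 0, 1] := by
  simp [Bmat, Amat, Matrix.mul_fin_two]; ring

lemma unipow {R : Type*} [CommRing R] (γ : R) (j : ℕ) :
    (!![1, γ; 0, 1] : Matrix (Fin 2) (Fin 2) R) ^ j = !![1, (j : R) * γ; 0, 1] := by
  induction j with
  | zero => simp [Matrix.one_fin_two]
  | succ j ih =>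
    rw [pow_succ, ih, Matrix.mul_fin_two]
    push_cast
    congr 1 <;> ring_nf

end AuxCombinatorial

section AuxZMod

noncomputable def phi (m : ℕ) (M : Matrix (Fin 2) (Fin 2) ℤ) :
    Matrix (Fin 2) (Fin 2) (ZMod m) := M.map Int.cast

lemma phi_mul (m : ℕ) (M N : Matrix (Fin 2) (Fin 2) ℤ) :
    phi m (M * N) = phi m M * phi m N := by
  simpa [phi] using Matrix.map_mul (L := M) (M := N) (f := Int.castRingHom (ZMod m))

lemma phi_one (m : ℕ) : phi m (1 : Matrix (Fin 2) (Fin 2) ℤ) = 1 := by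
  simp [phi, Matrix.map_one]

lemma phi_expl (m : ℕ) (a b c d : ℤ) :
    phi m !![a, b; c, d] = !![(a : ZMod m), b; c, d] := by
  ext i j
  fin_cases i <;> fin_cases j <;> simp [phi]

lemma phi_uni (m : ℕ) (c : ℤ) :
    phi m !![1, c; 0, 1] = !![1, (c : ZMod m); 0, 1] := by
  rw [phi_expl]; norm_num

lemma Uk_mem (p k : ℕ) (v : ℕ → ℕ) (M : Matrix (Fin 2) (Fin 2) (ZMod (p^k))) :
    M ∈ Uk p k v ↔ ∃ n : ℕ, M = phi (p^k) (Aword (wordPrefix v n)) := Iff.rfl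

lemma claim1 (p k : ℕ) [Fact p.Prime] (hk : 1 ≤ k) (w : ℕ → ℕ) (n l : ℕ)
    (h1 : Uk p k (shiftW w n) = Uk p k (shiftW w l))
    (h2 : Uk p k (shiftW w (n+1)) = Uk p k (shiftW w (l+1))) (j : ℕ) :
    (!![1, (((w n : ℤ) - (w l : ℤ) : ℤ) : ZMod (p ^ k)); 0, 1] :
      Matrix (Fin 2) (Fin 2) (ZMod (p ^ k))) ^ j ∈ Uk p k (shiftW w (l+1)) := by
  have hp : 1 < p ^ k := by
    have := (Fact.out : p.Prime).two_le
    calc 1 < p := by omega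
    _ ≤ p ^ k := Nat.le_self_pow (by omega) p
  haveI : NeZero (p ^ k) := ⟨by omega⟩
  haveI : Nontrivial (ZMod (p ^ k)) := ZMod.nontrivial_iff.mpr (by omega)
  set cb : ZMod (p ^ k) := (((w n : ℤ) - (w l : ℤ) : ℤ) : ZMod (p ^ k)) with hcb
  set X : Matrix (Fin 2) (Fin 2) (ZMod (p ^ k)) := !![1, cb; 0, 1] with hX
  induction j with
  | zero =>
    rw [Uk_mem]
    exact ⟨0, by rw [pow_zero, show wordPrefix (shiftW w (l+1)) 0 = [] from rfl,
      show Aword [] = 1 from rfl, phi_one]⟩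
  | succ j ih =>
    rw [← h2, Uk_mem] at ih
    obtain ⟨m', hm'⟩ := ih
    have hmem : phi (p^k) (Amat (w n)) * X ^ j ∈ Uk p k (shiftW w n) := by
      rw [Uk_mem]
      refine ⟨m' + 1, ?_⟩
      rw [wordPrefix_succ_shift, Aword_cons, phi_mul, hm']
    rw [h1, Uk_mem] at hmem
    obtain ⟨m'', hm''⟩ := hmem
    match m'', hm'' with
    | 0, hm'' =>
      exfalso
      rw [show wordPrefix (shiftW w l) 0 = [] from rfl,
        show Aword [] = 1 from rfl, phi_one] at hm''
      have hXj : X ^ j = phi (p^k) (Bmat (w n)) := by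
        calc X ^ j = (phi (p^k) (Bmat (w n)) * phi (p^k) (Amat (w n))) * X ^ j := by
              rw [← phi_mul, Bmat_Amat, phi_one, one_mul]
          _ = phi (p^k) (Bmat (w n)) * (phi (p^k) (Amat (w n)) * X ^ j) := by rw [mul_assoc]
          _ = phi (p^k) (Bmat (w n)) := by rw [hm'', mul_one]
      have hX10 : (X ^ j) 1 0 = 0 := by rw [hX, unipow]; simp
      have hB10 : (phi (p^k) (Bmat (w n))) 1 0 = 1 := by simp [phi, Bmat]
      rw [hXj, hB10] at hX10
      exact one_ne_zero hX10
    | (m₃+1), hm'' =>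
      rw [Uk_mem]
      refine ⟨m₃, ?_⟩
      rw [wordPrefix_succ_shift, Aword_cons, phi_mul] at hm''
      have key : phi (p^k) (Bmat (w l)) * (phi (p^k) (Amat (w n)) * X ^ j)
          = phi (p^k) (Aword (wordPrefix (shiftW w (l+1)) m₃)) := by
        rw [hm'', ← mul_assoc, ← phi_mul, Bmat_Amat, phi_one, one_mul]
      rw [← mul_assoc, ← phi_mul, Bmat_mul_Amat, phi_uni, ← hcb, ← hX] at key
      rw [pow_succ', key]

end AuxZMod

section AuxPadic
variable {p : ℕ} [Fact p.Prime]

lemma exists_int_approx (x : ℚ_[p]) (hx : ‖x‖ ≤ 1) (m : ℕ) :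
    ∃ a : ℕ, (a : ℝ) < (p : ℝ) ^ m ∧ ‖x - (a : ℚ_[p])‖ ≤ (p : ℝ) ^ (-(m : ℤ)) := by
  set x' : ℤ_[p] := ⟨x, hx⟩ with hx'
  refine ⟨x'.appr m, ?_, ?_⟩
  · exact_mod_cast Nat.cast_lt.mpr (PadicInt.appr_lt x' m)
  · have hs := PadicInt.appr_spec m x'
    rw [Ideal.mem_span_singleton] at hs
    obtain ⟨z, hz⟩ := hs
    have : x - (x'.appr m : ℚ_[p]) = ((p : ℤ_[p]) ^ m * z : ℤ_[p]) := by
      rw [← hz]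
      push_cast [hx']
      ring_nf
      rfl
    rw [this]
    push_cast
    rw [norm_mul]
    calc ‖((p:ℤ_[p]) : ℚ_[p]) ^ m‖ * ‖((z : ℤ_[p]) : ℚ_[p])‖
        ≤ ‖((p:ℤ_[p]) : ℚ_[p]) ^ m‖ * 1 := by
          apply mul_le_mul_of_nonneg_left _ (norm_nonneg _)
          rw [← PadicInt.norm_def]; exact PadicInt.norm_le_one z
      _ = (p : ℝ) ^ (-(m : ℤ)) := by
          rw [mul_one]
          push_cast
          exact Padic.norm_p_pow m

lemma norm_int_dvd_le (k : ℕ) (z : ℤ) (h : (p : ℤ) ^ k ∣ z) :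
    ‖(z : ℚ_[p])‖ ≤ (p : ℝ) ^ (-(k : ℤ)) :=
  (Padic.norm_int_le_pow_iff_dvd z k).mpr (by exact_mod_cast h)

lemma matQ_mul (M N : Matrix (Fin 2) (Fin 2) ℤ) :
    matQ p (M * N) = matQ p M * matQ p N := by
  simpa [matQ] using Matrix.map_mul (L := M) (M := N) (f := Int.castRingHom ℚ_[p])

lemma Q_decomp (w : ℕ → ℕ) (y : Fin 2 → ℚ_[p]) (s m : ℕ) (i : Fin 2) :
    (matQ p (Aword (wordPrefix w (s + m)))ᵀ).mulVec y i
      = ((Aword (wordPrefix (shiftW w s) m)) 0 i : ℚ_[p]) *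
          ((matQ p (Aword (wordPrefix w s))ᵀ).mulVec y 0)
        + ((Aword (wordPrefix (shiftW w s) m)) 1 i : ℚ_[p]) *
          ((matQ p (Aword (wordPrefix w s))ᵀ).mulVec y 1) := by
  rw [wordPrefix_add, Aword_append, transpose_mul, matQ_mul, ← mulVec_mulVec]
  show ((matQ p (Aword (wordPrefix (shiftW w s) m))ᵀ).mulVec _) i = _
  rw [Matrix.mulVec]
  simp [dotProduct, Fin.sum_univ_two, matQ, Matrix.map_apply]

end AuxPadic


set_option maxHeartbeats 1000000 in
/-- for `(w, y) ∈ LMad` and `k` large, consecutive pairs of sets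
`U_k(T^n w), U_k(T^{n+1} w)` determine the letter of `w` at position `n`. -/
theorem stmt_19 (p : ℕ) [Fact p.Prime] (w : ℕ → ℕ) (y : Fin 2 → ℚ_[p]) (hy : y ≠ 0)
    (hL : LMad p w y) :
    ∃ k₀ : ℕ, ∀ k : ℕ, k₀ < k → ∀ n l : ℕ,
      Uk p k (shiftW w n) = Uk p k (shiftW w l) →
      Uk p k (shiftW w (n + 1)) = Uk p k (shiftW w (l + 1)) →
      w n = w l := by
  obtain ⟨ε, hε, hbound, hPB⟩ := hL
  have hp2 : 2 ≤ p := (Fact.out : p.Prime).two_le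
  have hp1R : (1 : ℝ) < p := by exact_mod_cast by omega
  have hp0R : (0 : ℝ) < p := by linarith
  -- constants
  set N : ℤ := ⌊ε⁻¹⌋ + 1 with hNdef
  have hN1 : 1 ≤ N := by
    have : (0:ℤ) ≤ ⌊ε⁻¹⌋ := Int.floor_nonneg.mpr (le_of_lt (inv_pos.mpr hε))
    omega
  set ν : ℕ := N.toNat with hνdef
  have hνN : (ν : ℤ) = N := Int.toNat_of_nonneg (by omega)
  set β : ℕ := ⌈ε⁻¹⌉₊ with hβdef
  have hβ : ε⁻¹ ≤ (p : ℝ) ^ β := by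
    calc ε⁻¹ ≤ (β : ℝ) := Nat.le_ceil _
      _ ≤ (2:ℝ) ^ β := by exact_mod_cast (Nat.lt_two_pow_self (n := β)).le
      _ ≤ (p:ℝ) ^ β := by
          apply pow_le_pow_left₀ (by norm_num)
          exact_mod_cast hp2
  set μ : ℕ := β + ν with hμdef
  set A : ℝ := (p : ℝ) ^ μ with hAdef
  have hA1 : 1 ≤ A := one_le_pow₀ hp1R.le
  obtain ⟨k₀, hk₀⟩ := pow_unbounded_of_one_lt (max ε⁻¹ (A^2/ε^2)) hp1R
  refine ⟨k₀, fun k hk n l h1 h2 => ?_⟩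
  by_contra hne
  have hkk : (p:ℝ) ^ k₀ ≤ (p:ℝ) ^ k := pow_le_pow_right₀ hp1R.le hk.le
  have hpk_eps : ε⁻¹ < (p:ℝ)^k := lt_of_le_of_lt (le_max_left _ _) (lt_of_lt_of_le hk₀ hkk)
  have hpk_A : A^2/ε^2 < (p:ℝ)^k := lt_of_le_of_lt (le_max_right _ _) (lt_of_lt_of_le hk₀ hkk)
  have hk1 : 1 ≤ k := by omega
  have hpkpos : (0:ℝ) < (p:ℝ)^k := pow_pos hp0R k
  -- the integer c
  set c : ℤ := (w n : ℤ) - (w l : ℤ) with hcdef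
  have hc0 : c ≠ 0 := by
    intro h
    apply hne
    have : (w n : ℤ) = (w l : ℤ) := by omega
    exact_mod_cast this
  have hcabs : |c| < (p:ℤ) ^ ν := by
    have h1n := hbound n
    have h2n := hbound l
    have hb2 : (ν:ℤ) ≤ 2 ^ ν := by exact_mod_cast (Nat.lt_two_pow_self (n := ν)).le

    have hb3 : (2:ℤ) ^ ν ≤ (p:ℤ) ^ ν := pow_le_pow_left₀ (by norm_num) (by exact_mod_cast hp2) ν
    have hcN : |c| ≤ N - 1 := by
      rw [abs_le]
      omega
    calc |c| < (ν:ℤ) := by omega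
      _ ≤ 2 ^ ν := hb2
      _ ≤ (p:ℤ) ^ ν := hb3
  have hcnorm : (p : ℝ) ^ (-(ν:ℤ)) < ‖(c : ℚ_[p])‖ := by
    by_contra hcon
    push_neg at hcon
    have hdvd : (p:ℤ)^ν ∣ c := by
      exact_mod_cast (Padic.norm_int_le_pow_iff_dvd c ν).mp hcon
    have hle := Int.le_of_dvd (abs_pos.mpr hc0) ((dvd_abs _ _).mpr hdvd)
    exact absurd hcabs (not_lt.mpr hle)
  -- the vector q'
  set q' : Fin 2 → ℚ_[p] := (matQ p (Aword (wordPrefix w (l+1)))ᵀ).mulVec y with hq'def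
  set M' : ℝ := max ‖q' 0‖ ‖q' 1‖ with hM'def
  have hq' : PBadE p ε q' := hPB (l+1)
  have h10 := hq' 1 0 (by norm_num)
  have h10' : ε ≤ ‖q' 0‖ / M' := by
    simpa using h10
  have hM'nonneg : 0 ≤ M' := le_trans (norm_nonneg _) (le_max_left _ _)
  have hM'pos : 0 < M' := by
    rcases eq_or_lt_of_le hM'nonneg with h | h
    · exfalso
      rw [← h] at h10'
      simp at h10'
      linarith
    · exact h
  have hq'0 : ε * M' ≤ ‖q' 0‖ := (le_div_iff₀ hM'pos).mp h10'
  have hq'0pos : 0 < ‖q' 0‖ := lt_of_lt_of_le (mul_pos hε hM'pos) hq'0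
  have hq'0ne : q' 0 ≠ 0 := by
    intro h; rw [h] at hq'0pos; simp at hq'0pos
  -- x, b, θ
  set x : ℚ_[p] := q' 1 / q' 0 with hxdef
  have hq'1x : q' 1 = x * q' 0 := by
    rw [hxdef]; field_simp
  have hxnorm : ‖x‖ ≤ ε⁻¹ := by
    have h1 : ‖x‖ = ‖q' 1‖ / ‖q' 0‖ := norm_div _ _
    have h2 : ‖q' 1‖ / ‖q' 0‖ ≤ M' / (ε * M') :=
      div_le_div₀ hM'nonneg (le_max_right _ _) (mul_pos hε hM'pos) hq'0
    have h3 : M' / (ε * M') = ε⁻¹ := by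
      rw [mul_comm]
      rw [← div_div, div_self (ne_of_gt hM'pos), one_div]
    rw [h1, ← h3]; exact h2
  set b : ℤ := (p:ℤ)^β with hbdef
  have hbne : b ≠ 0 := pow_ne_zero _ (by exact_mod_cast (by omega : p ≠ 0))
  have hbnorm : ‖(b : ℚ_[p])‖ = (p:ℝ) ^ (-(β:ℤ)) := by
    rw [hbdef]; push_cast
    exact Padic.norm_p_pow β
  set θ : ℚ_[p] := (b : ℚ_[p]) * x with hθdef
  have hθ1 : ‖θ‖ ≤ 1 := by
    rw [hθdef, norm_mul, hbnorm]
    calc (p:ℝ) ^ (-(β:ℤ)) * ‖x‖ ≤ (p:ℝ) ^ (-(β:ℤ)) * (p:ℝ)^β := by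
          apply mul_le_mul_of_nonneg_left (le_trans hxnorm hβ)
          positivity
      _ = 1 := by
          rw [_root_.zpow_neg, zpow_natCast]
          field_simp
  obtain ⟨a₀, ha₀lt, ha₀⟩ := exists_int_approx θ hθ1 μ
  set a : ℤ := -(a₀ : ℤ) with hadef
  have haθ : ‖(a : ℚ_[p]) + θ‖ ≤ (p:ℝ) ^ (-(μ:ℤ)) := by
    have : (a : ℚ_[p]) + θ = θ - (a₀ : ℚ_[p]) := by
      rw [hadef]; push_cast; ring
    rw [this]; exact ha₀
  -- bc and y₀
  have hbcnorm : (p:ℝ) ^ (-(μ:ℤ)) < ‖(b:ℚ_[p]) * (c:ℚ_[p])‖ := by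
    rw [norm_mul, hbnorm]
    have : (p:ℝ) ^ (-(μ:ℤ)) = (p:ℝ)^(-(β:ℤ)) * (p:ℝ)^(-(ν:ℤ)) := by
      rw [← zpow_add₀ (ne_of_gt hp0R)]
      congr 1
      push_cast [hμdef]
      ring
    rw [this]
    exact mul_lt_mul_of_pos_left hcnorm (by positivity)
  have hbcne : (b:ℚ_[p]) * (c:ℚ_[p]) ≠ 0 := by
    exact mul_ne_zero (Int.cast_ne_zero.mpr hbne) (Int.cast_ne_zero.mpr hc0)
  -- y₀ and the exponent j
  set y₀ : ℚ_[p] := -((a:ℚ_[p]) + θ) / ((b:ℚ_[p]) * (c:ℚ_[p])) with hy₀def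
  have hy₀ : ‖y₀‖ ≤ 1 := by
    rw [hy₀def, norm_div, norm_neg]
    rw [div_le_one (lt_trans (by positivity) hbcnorm)]
    exact le_trans haθ (le_of_lt hbcnorm)
  obtain ⟨j, hjlt, hj⟩ := exists_int_approx y₀ hy₀ k
  have hbc1 : ‖(b:ℚ_[p]) * (c:ℚ_[p])‖ ≤ 1 := by
    rw [norm_mul]
    exact mul_le_one₀ (Padic.norm_int_le_one b) (norm_nonneg _)
      (Padic.norm_int_le_one c)
  have hkey : ‖((a + b * (j:ℤ) * c : ℤ) : ℚ_[p]) + θ‖ ≤ (p:ℝ)^(-(k:ℤ)) := by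
    have hbcy : ((b:ℚ_[p]) * (c:ℚ_[p])) * y₀ = -((a:ℚ_[p]) + θ) := by
      rw [hy₀def]
      field_simp
    have e1 : ((a + b * (j:ℤ) * c : ℤ) : ℚ_[p]) + θ
        = ((b:ℚ_[p]) * (c:ℚ_[p])) * ((j:ℚ_[p]) - y₀) := by
      have expand : ((b:ℚ_[p]) * (c:ℚ_[p])) * ((j:ℚ_[p]) - y₀)
          = ((b:ℚ_[p]) * (c:ℚ_[p])) * (j:ℚ_[p]) - ((b:ℚ_[p]) * (c:ℚ_[p])) * y₀ := by ring
      rw [expand, hbcy]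
      push_cast
      ring
    rw [e1, norm_mul]
    calc ‖(b:ℚ_[p]) * (c:ℚ_[p])‖ * ‖(j:ℚ_[p]) - y₀‖
        ≤ 1 * ‖(j:ℚ_[p]) - y₀‖ := mul_le_mul_of_nonneg_right hbc1 (norm_nonneg _)
      _ = ‖y₀ - (j:ℚ_[p])‖ := by rw [one_mul, norm_sub_rev]
      _ ≤ _ := hj
  -- the factor whose matrix is congruent to the unipotent power
  obtain ⟨m, hm⟩ := (Uk_mem p k _ _).mp (claim1 p k hk1 w n l h1 h2 j)
  rw [unipow] at hm
  set C : Matrix (Fin 2) (Fin 2) ℤ := Aword (wordPrefix (shiftW w (l+1)) m) with hCdef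
  set D' : Matrix (Fin 2) (Fin 2) ℤ := !![1, (j:ℤ)*c; 0, 1] with hD'def
  have hphi : phi (p^k) D' = phi (p^k) C := by
    rw [hD'def, phi_uni]
    rw [← hm]
    have hXY : (((j:ℤ) * c : ℤ) : ZMod (p^k)) = (j : ZMod (p^k)) * ((c : ℤ) : ZMod (p^k)) := by
      push_cast
      ring
    rw [hXY]
  have hdvd : ∀ i i' : Fin 2, (p:ℤ)^k ∣ C i i' - D' i i' := by
    intro i i'
    have h := congrFun (congrFun hphi i) i'
    simp only [phi, Matrix.map_apply] at h
    have hmm := (ZMod.intCast_eq_intCast_iff _ _ _).mp h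
    exact_mod_cast hmm.dvd
  have h00 : (p:ℤ)^k ∣ C 0 0 - 1 := by simpa [hD'def] using hdvd 0 0
  have h01 : (p:ℤ)^k ∣ C 0 1 - (j:ℤ)*c := by simpa [hD'def] using hdvd 0 1
  have h10 : (p:ℤ)^k ∣ C 1 0 := by simpa [hD'def] using hdvd 1 0
  have h11 : (p:ℤ)^k ∣ C 1 1 - 1 := by simpa [hD'def] using hdvd 1 1
  -- the vector Q
  set Q : Fin 2 → ℚ_[p] := (matQ p (Aword (wordPrefix w (l+1+m)))ᵀ).mulVec y with hQdef
  have hQP : PBadE p ε Q := hPB (l+1+m)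
  have hQi : ∀ i, Q i = (C 0 i : ℚ_[p]) * q' 0 + (C 1 i : ℚ_[p]) * q' 1 := by
    intro i
    rw [hQdef, Q_decomp w y (l+1) m i]
  -- numerator bound
  have hq0M : ‖q' 0‖ ≤ M' := le_max_left _ _
  have hq1M : ‖q' 1‖ ≤ M' := le_max_right _ _
  have hEbound : ‖(a:ℚ_[p]) * Q 0 + (b:ℚ_[p]) * Q 1‖ ≤ (p:ℝ)^(-(k:ℤ)) * M' := by
    set H : ℤ := a + b * (j:ℤ) * c with hHdef
    set T1 : ℚ_[p] := ((H:ℤ):ℚ_[p]) * q' 0 + ((b:ℤ):ℚ_[p]) * (x * q' 0) with hT1def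
    set T2 : ℚ_[p] := ((a * C 0 0 + b * C 0 1 - H : ℤ):ℚ_[p]) * q' 0 with hT2def
    set T3 : ℚ_[p] := ((a * C 1 0 + b * C 1 1 - b : ℤ):ℚ_[p]) * q' 1 with hT3def
    have hE : (a:ℚ_[p]) * Q 0 + (b:ℚ_[p]) * Q 1 = T1 + T2 + T3 := by
      rw [hT1def, hT2def, hT3def, hQi 0, hQi 1, ← hq'1x, hHdef]
      push_cast
      ring
    have hbT1 : ‖T1‖ ≤ (p:ℝ)^(-(k:ℤ)) * M' := by
      have : T1 = (((H:ℤ):ℚ_[p]) + θ) * q' 0 := by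
        rw [hT1def, hθdef]; ring
      rw [this, norm_mul]
      exact mul_le_mul hkey hq0M (norm_nonneg _) (by positivity)
    have hbT2 : ‖T2‖ ≤ (p:ℝ)^(-(k:ℤ)) * M' := by
      rw [hT2def, norm_mul]
      refine mul_le_mul (norm_int_dvd_le k _ ?_) hq0M (norm_nonneg _) (by positivity)
      have : a * C 0 0 + b * C 0 1 - H = a * (C 0 0 - 1) + b * (C 0 1 - (j:ℤ)*c) := by
        rw [hHdef]; ring
      rw [this]
      exact dvd_add (h00.mul_left a) (h01.mul_left b)
    have hbT3 : ‖T3‖ ≤ (p:ℝ)^(-(k:ℤ)) * M' := by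
      rw [hT3def, norm_mul]
      refine mul_le_mul (norm_int_dvd_le k _ ?_) hq1M (norm_nonneg _) (by positivity)
      have : a * C 1 0 + b * C 1 1 - b = a * (C 1 0) + b * (C 1 1 - 1) := by ring
      rw [this]
      exact dvd_add (h10.mul_left a) (h11.mul_left b)
    rw [hE]
    calc ‖T1 + T2 + T3‖ ≤ max ‖T1 + T2‖ ‖T3‖ := Padic.nonarchimedean _ _
      _ ≤ max (max ‖T1‖ ‖T2‖) ‖T3‖ :=
          max_le_max (Padic.nonarchimedean _ _) le_rfl
      _ ≤ (p:ℝ)^(-(k:ℤ)) * M' := max_le (max_le hbT1 hbT2) hbT3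
  -- denominator bound
  have hpksmall : (p:ℝ)^(-(k:ℤ)) < ε := by
    rw [_root_.zpow_neg, zpow_natCast]
    exact (inv_lt_comm₀ hpkpos hε).mpr hpk_eps
  have hQ0ge : ‖q' 0‖ ≤ ‖Q 0‖ := by
    set R : ℚ_[p] := ((C 0 0 - 1 : ℤ):ℚ_[p]) * q' 0 + ((C 1 0 : ℤ):ℚ_[p]) * q' 1 with hRdef
    have hQR : Q 0 = q' 0 + R := by
      rw [hQi 0, hRdef]
      push_cast
      ring
    have hRsmall : ‖R‖ < ‖q' 0‖ := by
      have hb1 : ‖((C 0 0 - 1 : ℤ):ℚ_[p]) * q' 0‖ ≤ (p:ℝ)^(-(k:ℤ)) * M' := by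
        rw [norm_mul]
        exact mul_le_mul (norm_int_dvd_le k _ h00) hq0M (norm_nonneg _) (by positivity)
      have hb2 : ‖((C 1 0 : ℤ):ℚ_[p]) * q' 1‖ ≤ (p:ℝ)^(-(k:ℤ)) * M' := by
        rw [norm_mul]
        exact mul_le_mul (norm_int_dvd_le k _ h10) hq1M (norm_nonneg _) (by positivity)
      have : ‖R‖ ≤ (p:ℝ)^(-(k:ℤ)) * M' :=
        le_trans (Padic.nonarchimedean _ _) (max_le hb1 hb2)
      calc ‖R‖ ≤ (p:ℝ)^(-(k:ℤ)) * M' := this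
        _ < ε * M' := by
            exact mul_lt_mul_of_pos_right hpksmall hM'pos
        _ ≤ ‖q' 0‖ := hq'0
    have hmax := Padic.nonarchimedean (Q 0) (-R)
    have : Q 0 + -R = q' 0 := by rw [hQR]; ring
    rw [this] at hmax
    rcases le_max_iff.mp hmax with h | h
    · exact h
    · rw [norm_neg] at h
      exact absurd (lt_of_le_of_lt h hRsmall) (lt_irrefl _)
  -- conclusion
  have hfin := hQP a b (fun h => hbne h.2)
  have hden : ε * M' ≤ max ‖Q 0‖ ‖Q 1‖ :=
    le_trans (le_trans hq'0 hQ0ge) (le_max_left _ _)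
  have hstep : ‖(a:ℚ_[p]) * Q 0 + (b:ℚ_[p]) * Q 1‖ / max ‖Q 0‖ ‖Q 1‖
      ≤ ((p:ℝ)^(-(k:ℤ)) * M') / (ε * M') :=
    div_le_div₀ (by positivity) hEbound (mul_pos hε hM'pos) hden
  have hsimp : ((p:ℝ)^(-(k:ℤ)) * M') / (ε * M') = (p:ℝ)^(-(k:ℤ)) / ε :=
    mul_div_mul_right _ _ (ne_of_gt hM'pos)
  have hb2pos : (0:ℝ) < (b:ℝ)^2 := by
    have : (b:ℝ) ≠ 0 := Int.cast_ne_zero.mpr hbne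
    positivity
  have hAa : max ((a:ℝ)^2) ((b:ℝ)^2) ≤ A^2 := by
    apply max_le
    · have ha0 : (a:ℝ) = -(a₀:ℝ) := by rw [hadef]; push_cast; ring
      have : ((a:ℝ))^2 = ((a₀:ℝ))^2 := by rw [ha0]; ring
      rw [this, hAdef]
      exact pow_le_pow_left₀ (by positivity) ha₀lt.le 2
    · have hble : (b:ℝ) ≤ A := by
        rw [hbdef, hAdef]
        push_cast
        exact pow_le_pow_right₀ hp1R.le (by omega)
      have hb0 : (0:ℝ) ≤ (b:ℝ) := by
        rw [hbdef]; push_cast; positivity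
      exact pow_le_pow_left₀ hb0 hble 2
  have hmaxpos : (0:ℝ) < max ((a:ℝ)^2) ((b:ℝ)^2) := lt_of_lt_of_le hb2pos (le_max_right _ _)
  have hAA : ε / A^2 ≤ ε / max ((a:ℝ)^2) ((b:ℝ)^2) :=
    div_le_div_of_nonneg_left hε.le hmaxpos hAa
  have hfinal : ε / A^2 ≤ (p:ℝ)^(-(k:ℤ)) / ε := by
    calc ε / A^2 ≤ ε / max ((a:ℝ)^2) ((b:ℝ)^2) := hAA
      _ ≤ _ := hfin
      _ ≤ ((p:ℝ)^(-(k:ℤ)) * M') / (ε * M') := hstep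
      _ = (p:ℝ)^(-(k:ℤ)) / ε := hsimp
  have hA2pos : (0:ℝ) < A^2 := by positivity
  rw [_root_.zpow_neg, zpow_natCast] at hfinal
  have hmul : ε * ε ≤ ((p:ℝ)^k)⁻¹ * A^2 := (div_le_div_iff₀ hA2pos hε).mp hfinal
  have h1' : A^2 < (p:ℝ)^k * ε^2 := (div_lt_iff₀ (by positivity : (0:ℝ) < ε^2)).mp hpk_A
  have h2' : ((p:ℝ)^k)⁻¹ * A^2 < ε^2 := by
    have := mul_lt_mul_of_pos_left h1' (inv_pos.mpr hpkpos)
    rwa [← mul_assoc, inv_mul_cancel₀ (ne_of_gt hpkpos), one_mul] at this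
  have hEq : ε^2 = ε * ε := pow_two ε
  rw [← hEq] at hmul
  exact absurd (lt_of_le_of_lt hmul h2') (lt_irrefl _)
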